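/- Let v be a value function and let the weighting functions w⁻, w⁺ be continuously differentiable on [0,1] with strictly positive derivatives. Then for every random variable ξ and all real numbers a < b such that E_{w⁻w⁺}[v(ξ − a)] and E_{w⁻w⁺}[v(ξ − b)] are well defined, the strict inequality E_{w⁻w⁺}[v(ξ − a)] > E_{w⁻w⁺}[v(ξ − b)] holds. -/

import Mathlib

open MeasureTheory Set

noncomputable section

/-- A value function: strictly increasing `v : ℝ → ℝ` with `v 0 = 0`. -/
def IsValueFun (v : ℝ → ℝ) : Prop := StrictMono v ∧ v 0 = 0

/-- A weighting function: a strictly increasing `w : [0,1] → [0,1]`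
with `w 0 = 0` and `w 1 = 1`. -/
def IsWeightFun (w : ℝ → ℝ) : Prop :=
  StrictMonoOn w (Icc 0 1) ∧ MapsTo w (Icc 0 1) (Icc 0 1) ∧ w 0 = 0 ∧ w 1 = 1

/-- The CPT distorted expectation
`E_{w⁻w⁺}[v(ζ)] = ∫₀^∞ w⁺(ℙ(v(ζ) ≥ t)) dt − ∫₀^∞ w⁻(ℙ(v(ζ) ≤ −t)) dt`. -/
def cptE {Ω : Type*} [MeasurableSpace Ω] (P : Measure Ω)
    (v wm wp : ℝ → ℝ) (ζ : Ω → ℝ) : ℝ :=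
  (∫ t in Ioi (0:ℝ), wp (P {ω | t ≤ v (ζ ω)}).toReal)
    - ∫ t in Ioi (0:ℝ), wm (P {ω | v (ζ ω) ≤ -t}).toReal

/-- Both integrals defining the CPT distorted expectation are finite. -/
def CptWellDef {Ω : Type*} [MeasurableSpace Ω] (P : Measure Ω)
    (v wm wp : ℝ → ℝ) (ζ : Ω → ℝ) : Prop :=
  IntegrableOn (fun t => wp (P {ω | t ≤ v (ζ ω)}).toReal) (Ioi 0) ∧
    IntegrableOn (fun t => wm (P {ω | v (ζ ω) ≤ -t}).toReal) (Ioi 0)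

/-- The generalized shortfall risk measure (GSR-CPT):
`ρ_{(v,w⁻,w⁺)}(ξ) = inf { x : E_{w⁻w⁺}[v(ξ − x)] ≤ 0 }`, with `inf ∅ = +∞`. -/
def gsr {Ω : Type*} [MeasurableSpace Ω] (P : Measure Ω)
    (v wm wp : ℝ → ℝ) (ξ : Ω → ℝ) : EReal :=
  sInf ((fun x : ℝ => (x : EReal)) ''
    {x : ℝ | cptE P v wm wp (fun ω => ξ ω - x) ≤ 0})

/-- A bounded random variable. -/
def IsBddRV {Ω : Type*} [MeasurableSpace Ω] (ξ : Ω → ℝ) : Prop :=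
  Measurable ξ ∧ ∃ M : ℝ, ∀ ω, |ξ ω| ≤ M

/-- A weighting function which is continuously differentiable on `[0,1]`
with strictly positive derivative. -/
def SmoothWeight (w : ℝ → ℝ) : Prop :=
  IsWeightFun w ∧ ContDiffOn ℝ 1 w (Icc 0 1) ∧
    ∀ p ∈ Icc (0:ℝ) 1, 0 < derivWithin w (Icc 0 1) p


private lemma cpt_aux_pos (z c t : ℝ) (hc : 0 < c) (ht : 0 < t) :
    t ≤ max (max (min z c) (-c)) 0 ↔ t ≤ c ∧ t ≤ z := by
  constructor
  · intro h
    rcases le_max_iff.1 h with h | h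
    · rcases le_max_iff.1 h with h | h
      · exact ⟨(le_min_iff.1 h).2, (le_min_iff.1 h).1⟩
      · linarith
    · linarith
  · rintro ⟨h1, h2⟩
    exact le_max_of_le_left (le_max_of_le_left (le_min h2 h1))

private lemma cpt_aux_neg (z c t : ℝ) (hc : 0 < c) (ht : 0 < t) :
    t ≤ max (-(max (min z c) (-c))) 0 ↔ t ≤ c ∧ z ≤ -t := by
  constructor
  · intro h
    rcases le_max_iff.1 h with h | h
    · have h' : max (min z c) (-c) ≤ -t := by linarith
      have h1 : (-c : ℝ) ≤ -t := le_trans (le_max_right _ _) h'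
      have h2 : min z c ≤ -t := le_trans (le_max_left _ _) h'
      refine ⟨by linarith, ?_⟩
      rcases min_le_iff.1 h2 with h3 | h3
      · exact h3
      · linarith
    · linarith
  · rintro ⟨h1, h2⟩
    have h3 : max (min z c) (-c) ≤ -t :=
      max_le (le_trans (min_le_left _ _) h2) (by linarith)
    exact le_max_of_le_left (by linarith)

private lemma cpt_aux_sum (z : ℝ) : max z 0 - max (-z) 0 = z := by
  rcases le_total z 0 with h | h
  · rw [max_eq_right h, max_eq_left (by linarith)]; ring
  · rw [max_eq_left h, max_eq_right (by linarith)]; ring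

/-- if the weighting functions are continuously differentiable on
`[0,1]` with strictly positive derivatives, then for `a < b`,
`E_{w⁻w⁺}[v(ξ − a)] > E_{w⁻w⁺}[v(ξ − b)]` whenever both are well defined. -/
theorem cptE_strict_antitone_shift {Ω : Type*} [MeasurableSpace Ω] (P : Measure Ω)
    [IsProbabilityMeasure P]
    (v wm wp : ℝ → ℝ) (hv : IsValueFun v) (hwm : SmoothWeight wm)
    (hwp : SmoothWeight wp)
    (ξ : Ω → ℝ) (hξ : Measurable ξ) (a b : ℝ) (hab : a < b)
    (hwda : CptWellDef P v wm wp (fun ω => ξ ω - a))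
    (hwdb : CptWellDef P v wm wp (fun ω => ξ ω - b)) :
    cptE P v wm wp (fun ω => ξ ω - b) < cptE P v wm wp (fun ω => ξ ω - a) := by
  obtain ⟨hv_mono, hv0⟩ := hv
  obtain ⟨⟨hwm_mono, hwm_maps, hwm0, hwm1⟩, -, -⟩ := hwm
  obtain ⟨⟨hwp_mono, hwp_maps, hwp0, hwp1⟩, -, -⟩ := hwp
  have hP1 : ∀ s : Set Ω, (P s).toReal ∈ Icc (0:ℝ) 1 := by
    intro s
    refine ⟨ENNReal.toReal_nonneg, ?_⟩
    have h := prob_le_one (μ := P) (s := s)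
    have h2 := ENNReal.toReal_mono ENNReal.one_ne_top h
    simpa using h2
  have hXY : ∀ ω, v (ξ ω - b) < v (ξ ω - a) := fun ω => hv_mono (by linarith)
  have hsubp : ∀ t : ℝ, {ω | t ≤ v (ξ ω - b)} ⊆ {ω | t ≤ v (ξ ω - a)} :=
    fun t ω h => le_trans h (hXY ω).le
  have hsubm : ∀ t : ℝ, {ω | v (ξ ω - a) ≤ -t} ⊆ {ω | v (ξ ω - b) ≤ -t} :=
    fun t ω h => le_trans (hXY ω).le h
  have keyp : ∀ t : ℝ, wp (P {ω | t ≤ v (ξ ω - b)}).toReal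
      ≤ wp (P {ω | t ≤ v (ξ ω - a)}).toReal := fun t =>
    hwp_mono.monotoneOn (hP1 _) (hP1 _)
      (ENNReal.toReal_mono (measure_ne_top _ _) (measure_mono (hsubp t)))
  have keym : ∀ t : ℝ, wm (P {ω | v (ξ ω - a) ≤ -t}).toReal
      ≤ wm (P {ω | v (ξ ω - b) ≤ -t}).toReal := fun t =>
    hwm_mono.monotoneOn (hP1 _) (hP1 _)
      (ENNReal.toReal_mono (measure_ne_top _ _) (measure_mono (hsubm t)))
  have hipa : IntegrableOn (fun t => wp (P {ω | t ≤ v (ξ ω - a)}).toReal) (Ioi (0:ℝ)) := hwda.1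
  have hipb : IntegrableOn (fun t => wp (P {ω | t ≤ v (ξ ω - b)}).toReal) (Ioi (0:ℝ)) := hwdb.1
  have hima : IntegrableOn (fun t => wm (P {ω | v (ξ ω - a) ≤ -t}).toReal) (Ioi (0:ℝ)) := hwda.2
  have himb : IntegrableOn (fun t => wm (P {ω | v (ξ ω - b) ≤ -t}).toReal) (Ioi (0:ℝ)) := hwdb.2
  have hIp : (∫ t in Ioi (0:ℝ), wp (P {ω | t ≤ v (ξ ω - b)}).toReal)
      ≤ ∫ t in Ioi (0:ℝ), wp (P {ω | t ≤ v (ξ ω - a)}).toReal :=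
    integral_mono hipb hipa fun t => keyp t
  have hIm : (∫ t in Ioi (0:ℝ), wm (P {ω | v (ξ ω - a) ≤ -t}).toReal)
      ≤ ∫ t in Ioi (0:ℝ), wm (P {ω | v (ξ ω - b) ≤ -t}).toReal :=
    integral_mono hima himb fun t => keym t
  show (∫ t in Ioi (0:ℝ), wp (P {ω | t ≤ v (ξ ω - b)}).toReal)
      - (∫ t in Ioi (0:ℝ), wm (P {ω | v (ξ ω - b) ≤ -t}).toReal)
    < (∫ t in Ioi (0:ℝ), wp (P {ω | t ≤ v (ξ ω - a)}).toReal)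
      - (∫ t in Ioi (0:ℝ), wm (P {ω | v (ξ ω - a) ≤ -t}).toReal)
  by_contra hcon
  push_neg at hcon
  have hIpeq : (∫ t in Ioi (0:ℝ), wp (P {ω | t ≤ v (ξ ω - a)}).toReal)
      = ∫ t in Ioi (0:ℝ), wp (P {ω | t ≤ v (ξ ω - b)}).toReal := by linarith
  have hImeq : (∫ t in Ioi (0:ℝ), wm (P {ω | v (ξ ω - b) ≤ -t}).toReal)
      = ∫ t in Ioi (0:ℝ), wm (P {ω | v (ξ ω - a) ≤ -t}).toReal := by linarith
  -- a.e. equality of positive tails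
  have haep : ∀ᵐ t ∂(volume.restrict (Ioi (0:ℝ))),
      P {ω | t ≤ v (ξ ω - a)} = P {ω | t ≤ v (ξ ω - b)} := by
    have hzp : (∫ t in Ioi (0:ℝ), (wp (P {ω | t ≤ v (ξ ω - a)}).toReal
        - wp (P {ω | t ≤ v (ξ ω - b)}).toReal)) = 0 := by
      rw [integral_sub hipa hipb]; linarith
    have h0 := (integral_eq_zero_iff_of_nonneg_ae
      (Filter.Eventually.of_forall fun t => sub_nonneg.2 (keyp t)) (hipa.sub hipb)).1 hzp
    filter_upwards [h0] with t ht
    have heq : wp (P {ω | t ≤ v (ξ ω - a)}).toReal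
        = wp (P {ω | t ≤ v (ξ ω - b)}).toReal := by
      have ht' : wp (P {ω | t ≤ v (ξ ω - a)}).toReal
          - wp (P {ω | t ≤ v (ξ ω - b)}).toReal = 0 := ht
      linarith
    have h2 := hwp_mono.injOn (hP1 _) (hP1 _) heq
    exact (ENNReal.toReal_eq_toReal_iff' (measure_ne_top _ _) (measure_ne_top _ _)).1 h2
  -- a.e. equality of negative tails
  have haem : ∀ᵐ t ∂(volume.restrict (Ioi (0:ℝ))),
      P {ω | v (ξ ω - a) ≤ -t} = P {ω | v (ξ ω - b) ≤ -t} := by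
    have hzm : (∫ t in Ioi (0:ℝ), (wm (P {ω | v (ξ ω - b) ≤ -t}).toReal
        - wm (P {ω | v (ξ ω - a) ≤ -t}).toReal)) = 0 := by
      rw [integral_sub himb hima]; linarith
    have h0 := (integral_eq_zero_iff_of_nonneg_ae
      (Filter.Eventually.of_forall fun t => sub_nonneg.2 (keym t)) (himb.sub hima)).1 hzm
    filter_upwards [h0] with t ht
    have heq : wm (P {ω | v (ξ ω - b) ≤ -t}).toReal
        = wm (P {ω | v (ξ ω - a) ≤ -t}).toReal := by
      have ht' : wm (P {ω | v (ξ ω - b) ≤ -t}).toReal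
          - wm (P {ω | v (ξ ω - a) ≤ -t}).toReal = 0 := ht
      linarith
    have h2 := hwm_mono.injOn (hP1 _) (hP1 _) heq
    exact ((ENNReal.toReal_eq_toReal_iff' (measure_ne_top _ _) (measure_ne_top _ _)).1 h2).symm
  have hvm : Measurable v := hv_mono.monotone.measurable
  have hXm : Measurable fun ω => v (ξ ω - b) := hvm.comp (hξ.sub measurable_const)
  have hYm : Measurable fun ω => v (ξ ω - a) := hvm.comp (hξ.sub measurable_const)
  -- choose truncation level
  obtain ⟨c, hc0, hcne⟩ : ∃ c : ℝ, 0 < c ∧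
      P {ω | -c < v (ξ ω - a) ∧ v (ξ ω - b) < c} ≠ 0 := by
    by_contra hcon2
    push_neg at hcon2
    have hun : (Set.univ : Set Ω) ⊆
        ⋃ n : ℕ, {ω | -((n:ℝ)+1) < v (ξ ω - a) ∧ v (ξ ω - b) < (n:ℝ)+1} := by
      intro ω _
      obtain ⟨n, hn⟩ := exists_nat_gt (max (-(v (ξ ω - a))) (v (ξ ω - b)))
      have h1 := (max_lt_iff.1 hn).1
      have h2 := (max_lt_iff.1 hn).2
      exact mem_iUnion.2 ⟨n, ⟨by linarith, by linarith⟩⟩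
    have h0 : P (⋃ n : ℕ, {ω | -((n:ℝ)+1) < v (ξ ω - a) ∧ v (ξ ω - b) < (n:ℝ)+1}) = 0 :=
      measure_iUnion_null fun n => hcon2 _ (by positivity)
    have hone : (1 : ENNReal) = 0 := by
      rw [← measure_univ (μ := P)]
      exact le_antisymm (le_trans (measure_mono hun) h0.le) zero_le
    simp at hone
  set Xc : Ω → ℝ := fun ω => max (min (v (ξ ω - b)) c) (-c) with hXc
  set Yc : Ω → ℝ := fun ω => max (min (v (ξ ω - a)) c) (-c) with hYc
  have hXcm : Measurable Xc := (hXm.min measurable_const).max measurable_const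
  have hYcm : Measurable Yc := (hYm.min measurable_const).max measurable_const
  -- layer cake
  have lc1 : (∫⁻ ω, ENNReal.ofReal (max (Yc ω) 0) ∂P)
      = ∫⁻ t in Ioi (0:ℝ), P {ω | t ≤ max (Yc ω) 0} :=
    lintegral_eq_lintegral_meas_le P (Filter.Eventually.of_forall fun ω => le_max_right _ _)
      (hYcm.max measurable_const).aemeasurable
  have lc2 : (∫⁻ ω, ENNReal.ofReal (max (Xc ω) 0) ∂P)
      = ∫⁻ t in Ioi (0:ℝ), P {ω | t ≤ max (Xc ω) 0} :=
    lintegral_eq_lintegral_meas_le P (Filter.Eventually.of_forall fun ω => le_max_right _ _)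
      (hXcm.max measurable_const).aemeasurable
  have lc3 : (∫⁻ ω, ENNReal.ofReal (max (-(Yc ω)) 0) ∂P)
      = ∫⁻ t in Ioi (0:ℝ), P {ω | t ≤ max (-(Yc ω)) 0} :=
    lintegral_eq_lintegral_meas_le P (Filter.Eventually.of_forall fun ω => le_max_right _ _)
      (hYcm.neg.max measurable_const).aemeasurable
  have lc4 : (∫⁻ ω, ENNReal.ofReal (max (-(Xc ω)) 0) ∂P)
      = ∫⁻ t in Ioi (0:ℝ), P {ω | t ≤ max (-(Xc ω)) 0} :=
    lintegral_eq_lintegral_meas_le P (Filter.Eventually.of_forall fun ω => le_max_right _ _)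
      (hXcm.neg.max measurable_const).aemeasurable
  have hp_eq : (∫⁻ ω, ENNReal.ofReal (max (Yc ω) 0) ∂P)
      = ∫⁻ ω, ENNReal.ofReal (max (Xc ω) 0) ∂P := by
    rw [lc1, lc2]
    refine lintegral_congr_ae ?_
    filter_upwards [haep, ae_restrict_mem measurableSet_Ioi] with t ht htpos
    by_cases htc : t ≤ c
    · have e1 : {ω | t ≤ max (Yc ω) 0} = {ω | t ≤ v (ξ ω - a)} := by
        ext ω
        simp only [mem_setOf_eq, hYc]
        rw [cpt_aux_pos _ _ _ hc0 htpos]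
        exact ⟨fun h => h.2, fun h => ⟨htc, h⟩⟩
      have e2 : {ω | t ≤ max (Xc ω) 0} = {ω | t ≤ v (ξ ω - b)} := by
        ext ω
        simp only [mem_setOf_eq, hXc]
        rw [cpt_aux_pos _ _ _ hc0 htpos]
        exact ⟨fun h => h.2, fun h => ⟨htc, h⟩⟩
      rw [e1, e2, ht]
    · push_neg at htc
      have e1 : {ω | t ≤ max (Yc ω) 0} = (∅ : Set Ω) := by
        ext ω
        simp only [mem_setOf_eq, mem_empty_iff_false, iff_false, hYc]
        rw [cpt_aux_pos _ _ _ hc0 htpos]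
        exact fun h => absurd h.1 (not_le.2 htc)
      have e2 : {ω | t ≤ max (Xc ω) 0} = (∅ : Set Ω) := by
        ext ω
        simp only [mem_setOf_eq, mem_empty_iff_false, iff_false, hXc]
        rw [cpt_aux_pos _ _ _ hc0 htpos]
        exact fun h => absurd h.1 (not_le.2 htc)
      rw [e1, e2]
  have hm_eq : (∫⁻ ω, ENNReal.ofReal (max (-(Yc ω)) 0) ∂P)
      = ∫⁻ ω, ENNReal.ofReal (max (-(Xc ω)) 0) ∂P := by
    rw [lc3, lc4]
    refine lintegral_congr_ae ?_
    filter_upwards [haem, ae_restrict_mem measurableSet_Ioi] with t ht htpos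
    by_cases htc : t ≤ c
    · have e1 : {ω | t ≤ max (-(Yc ω)) 0} = {ω | v (ξ ω - a) ≤ -t} := by
        ext ω
        simp only [mem_setOf_eq, hYc]
        rw [cpt_aux_neg _ _ _ hc0 htpos]
        exact ⟨fun h => h.2, fun h => ⟨htc, h⟩⟩
      have e2 : {ω | t ≤ max (-(Xc ω)) 0} = {ω | v (ξ ω - b) ≤ -t} := by
        ext ω
        simp only [mem_setOf_eq, hXc]
        rw [cpt_aux_neg _ _ _ hc0 htpos]
        exact ⟨fun h => h.2, fun h => ⟨htc, h⟩⟩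
      rw [e1, e2, ht]
    · push_neg at htc
      have e1 : {ω | t ≤ max (-(Yc ω)) 0} = (∅ : Set Ω) := by
        ext ω
        simp only [mem_setOf_eq, mem_empty_iff_false, iff_false, hYc]
        rw [cpt_aux_neg _ _ _ hc0 htpos]
        exact fun h => absurd h.1 (not_le.2 htc)
      have e2 : {ω | t ≤ max (-(Xc ω)) 0} = (∅ : Set Ω) := by
        ext ω
        simp only [mem_setOf_eq, mem_empty_iff_false, iff_false, hXc]
        rw [cpt_aux_neg _ _ _ hc0 htpos]
        exact fun h => absurd h.1 (not_le.2 htc)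
      rw [e1, e2]
  have hXcle : ∀ ω, Xc ω ≤ c := fun ω =>
    max_le (min_le_right _ _) (by linarith)
  have hYcge : ∀ ω, -c ≤ Yc ω := fun ω => le_max_right _ _
  have hfi : (∫⁻ ω, (ENNReal.ofReal (max (Xc ω) 0) + ENNReal.ofReal (max (-(Yc ω)) 0)) ∂P) ≠ ⊤ := by
    have hb : (∫⁻ ω, (ENNReal.ofReal (max (Xc ω) 0) + ENNReal.ofReal (max (-(Yc ω)) 0)) ∂P)
        ≤ ∫⁻ _ω, (ENNReal.ofReal c + ENNReal.ofReal c) ∂P := by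
      refine lintegral_mono fun ω => add_le_add ?_ ?_
      · exact ENNReal.ofReal_le_ofReal (max_le (hXcle ω) hc0.le)
      · exact ENNReal.ofReal_le_ofReal (max_le (by linarith [hYcge ω]) hc0.le)
    rw [lintegral_const] at hb
    refine ne_top_of_le_ne_top ?_ hb
    exact ENNReal.mul_ne_top (ENNReal.add_ne_top.2 ⟨ENNReal.ofReal_ne_top, ENNReal.ofReal_ne_top⟩)
      (by simp [measure_univ])
  have hXcYc : ∀ ω, Xc ω ≤ Yc ω := fun ω =>
    max_le_max (min_le_min (hXY ω).le le_rfl) le_rfl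
  have hstrict : (∫⁻ ω, (ENNReal.ofReal (max (Xc ω) 0) + ENNReal.ofReal (max (-(Yc ω)) 0)) ∂P)
      < ∫⁻ ω, (ENNReal.ofReal (max (Yc ω) 0) + ENNReal.ofReal (max (-(Xc ω)) 0)) ∂P := by
    refine lintegral_strict_mono_of_ae_le_of_ae_lt_on
      (((hYcm.max measurable_const).ennreal_ofReal.add
        (hXcm.neg.max measurable_const).ennreal_ofReal).aemeasurable)
      hfi (Filter.Eventually.of_forall fun ω => ?_) hcne (Filter.Eventually.of_forall fun ω hω => ?_)
    · dsimp only
      rw [← ENNReal.ofReal_add (le_max_right _ _) (le_max_right _ _),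
        ← ENNReal.ofReal_add (le_max_right _ _) (le_max_right _ _)]
      apply ENNReal.ofReal_le_ofReal
      have h1 := cpt_aux_sum (Xc ω)
      have h2 := cpt_aux_sum (Yc ω)
      linarith [hXcYc ω]
    · have hlt : Xc ω < Yc ω := by
        have hxlt : v (ξ ω - b) < c := hω.2
        have hygt : -c < v (ξ ω - a) := hω.1
        have e1 : Xc ω = max (v (ξ ω - b)) (-c) := by
          rw [hXc]
          simp only []
          rw [min_eq_left hxlt.le]
        have e2 : Yc ω = min (v (ξ ω - a)) c := by
          rw [hYc]
          simp only []
          rw [max_eq_left (le_min hygt.le (by linarith))]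
        rw [e1, e2]
        exact max_lt (lt_min (hXY ω) hxlt) (lt_min hygt (by linarith))
      rw [← ENNReal.ofReal_add (le_max_right _ _) (le_max_right _ _),
        ← ENNReal.ofReal_add (le_max_right _ _) (le_max_right _ _)]
      refine (ENNReal.ofReal_lt_ofReal_iff_of_nonneg
        (add_nonneg (le_max_right _ _) (le_max_right _ _))).2 ?_
      have h1 := cpt_aux_sum (Xc ω)
      have h2 := cpt_aux_sum (Yc ω)
      linarith
  rw [lintegral_add_left (hXcm.max measurable_const).ennreal_ofReal,
    lintegral_add_left (hYcm.max measurable_const).ennreal_ofReal,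
    hp_eq, hm_eq] at hstrict
  exact lt_irrefl _ hstrict
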